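/- Let 0 < q < 1, b > 0, and f : [0,b] → ℝ continuous and convex. Then f(b/(1+q)) ≤ (1/b)·I_q(f;0,b) ≤ (1/(1+q))·(q·f(0) + f(b)). -/

import Mathlib

open scoped BigOperators
open Set

/-- A convex function on `Icc 0 b` has a subgradient at any interior point `c`. -/
lemma exists_subgrad {b c : ℝ} {f : ℝ → ℝ} (hb : 0 < b)
    (hconv : ConvexOn ℝ (Icc 0 b) f) (hc0 : 0 < c) (hcb : c < b) :
    ∃ s : ℝ, ∀ x ∈ Icc (0:ℝ) b, f c + s * (x - c) ≤ f x := by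
  set T : Set ℝ := (fun y => (f y - f c) / (y - c)) '' Ioc c b with hT
  have hne : T.Nonempty := ⟨_, ⟨b, ⟨hcb, le_refl b⟩, rfl⟩⟩
  have hcmem : c ∈ Icc (0:ℝ) b := ⟨hc0.le, hcb.le⟩
  have h0mem : (0:ℝ) ∈ Icc (0:ℝ) b := ⟨le_refl 0, hb.le⟩
  have hbdd : BddBelow T := by
    refine ⟨(f c - f 0) / (c - 0), ?_⟩
    rintro r ⟨y, hy, rfl⟩
    exact hconv.slope_mono_adjacent h0mem ⟨(hc0.trans hy.1).le, hy.2⟩ hc0 hy.1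
  refine ⟨sInf T, fun x hx => ?_⟩
  rcases lt_trichotomy x c with hlt | heq | hgt
  · have hle : (f c - f x) / (c - x) ≤ sInf T := by
      apply le_csInf hne
      rintro r ⟨y, hy, rfl⟩
      exact hconv.slope_mono_adjacent hx ⟨(hc0.trans hy.1).le, hy.2⟩ hlt hy.1
    have hcx : 0 < c - x := by linarith
    rw [div_le_iff₀ hcx] at hle
    nlinarith
  · simp [heq]
  · have hle : sInf T ≤ (f x - f c) / (x - c) :=
      csInf_le hbdd ⟨x, ⟨hgt, hx.2⟩, rfl⟩
    have hxc : 0 < x - c := by linarith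
    rw [le_div_iff₀ hxc] at hle
    linarith

/-- q-Hermite–Hadamard inequality for the Jackson q-integral on `[0,b]`. -/
theorem q_hermite_hadamard_Iq (q b : ℝ) (f : ℝ → ℝ)
    (hq0 : 0 < q) (hq1 : q < 1) (hb : 0 < b)
    (hcont : ContinuousOn f (Icc 0 b)) (hconv : ConvexOn ℝ (Icc 0 b) f) :
    f (b / (1 + q)) ≤ (1 / b) * (b * (1 - q) * ∑' n : ℕ, f (b * q ^ n) * q ^ n) ∧
      (1 / b) * (b * (1 - q) * ∑' n : ℕ, f (b * q ^ n) * q ^ n) ≤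
        (1 / (1 + q)) * (q * f 0 + f b) := by
  have h1q : (0:ℝ) < 1 + q := by linarith
  have h1q' : (0:ℝ) < 1 - q := by linarith
  have hqq : q * q < 1 := by nlinarith
  have hqq0 : 0 ≤ q * q := by positivity
  set c : ℝ := b / (1 + q) with hc
  have hc0 : 0 < c := div_pos hb h1q
  have hcb : c < b := by
    rw [hc, div_lt_iff₀ h1q]; nlinarith
  have hmem : ∀ n : ℕ, b * q ^ n ∈ Icc (0:ℝ) b := by
    intro n
    have h1 : q ^ n ≤ 1 := pow_le_one₀ hq0.le hq1.le
    have h2 : 0 ≤ q ^ n := pow_nonneg hq0.le n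
    constructor
    · positivity
    · nlinarith
  -- summability of the main series
  obtain ⟨M, hM⟩ := (isCompact_Icc : IsCompact (Icc (0:ℝ) b)).exists_bound_of_continuousOn hcont
  have hgeo : Summable (fun n : ℕ => q ^ n) := summable_geometric_of_lt_one hq0.le hq1
  have hgeo2 : Summable (fun n : ℕ => (q * q) ^ n) := summable_geometric_of_lt_one hqq0 hqq
  have hsum : Summable (fun n : ℕ => f (b * q ^ n) * q ^ n) := by
    apply Summable.of_norm_bounded (hgeo.mul_left M)
    intro n
    have h2 : 0 ≤ q ^ n := pow_nonneg hq0.le n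
    rw [norm_mul, Real.norm_eq_abs, Real.norm_eq_abs, abs_of_nonneg h2]
    exact mul_le_mul_of_nonneg_right (hM _ (hmem n)) h2
  set S : ℝ := ∑' n : ℕ, f (b * q ^ n) * q ^ n with hS
  have hrw : (1 / b) * (b * (1 - q) * S) = (1 - q) * S := by
    field_simp
  have htg : ∑' n : ℕ, q ^ n = (1 - q)⁻¹ := tsum_geometric_of_lt_one hq0.le hq1
  have htg2 : ∑' n : ℕ, (q * q) ^ n = (1 - q * q)⁻¹ := tsum_geometric_of_lt_one hqq0 hqq
  constructor
  · -- left inequality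
    rw [hrw]
    obtain ⟨s, hs⟩ := exists_subgrad hb hconv hc0 hcb
    have hL : ∀ n : ℕ, (f c - s * c) * q ^ n + (s * b) * (q * q) ^ n
        ≤ f (b * q ^ n) * q ^ n := by
      intro n
      have h2 : 0 ≤ q ^ n := pow_nonneg hq0.le n
      have := mul_le_mul_of_nonneg_right (hs _ (hmem n)) h2
      have hpow : (q * q) ^ n = q ^ n * q ^ n := mul_pow q q n
      have heq : (f c - s * c) * q ^ n + (s * b) * (q * q) ^ n
          = (f c + s * (b * q ^ n - c)) * q ^ n := by rw [hpow]; ring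
      linarith
    have hLsum : Summable (fun n : ℕ => (f c - s * c) * q ^ n + (s * b) * (q * q) ^ n) :=
      (hgeo.mul_left _).add (hgeo2.mul_left _)
    have hts : ∑' n : ℕ, ((f c - s * c) * q ^ n + (s * b) * (q * q) ^ n)
        = (f c - s * c) * (1 - q)⁻¹ + (s * b) * (1 - q * q)⁻¹ := by
      rw [Summable.tsum_add (hgeo.mul_left _) (hgeo2.mul_left _), tsum_mul_left, tsum_mul_left,
        htg, htg2]
    have key : f c = (1 - q) * ((f c - s * c) * (1 - q)⁻¹ + (s * b) * (1 - q * q)⁻¹) := by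
      have h1 : (1:ℝ) - q ≠ 0 := by linarith
      have h2 : (1:ℝ) - q * q ≠ 0 := by nlinarith
      have h3 : (1:ℝ) + q ≠ 0 := by linarith
      rw [hc]
      rw [show (1:ℝ) - q * q = (1 - q) * (1 + q) by ring]
      field_simp
      ring
    calc f c = (1 - q) * ((f c - s * c) * (1 - q)⁻¹ + (s * b) * (1 - q * q)⁻¹) := key
      _ = (1 - q) * ∑' n : ℕ, ((f c - s * c) * q ^ n + (s * b) * (q * q) ^ n) := by rw [hts]
      _ ≤ (1 - q) * S :=
          mul_le_mul_of_nonneg_left (Summable.tsum_le_tsum hL hLsum hsum) h1q'.le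
  · -- right inequality
    rw [hrw]
    have hU : ∀ n : ℕ, f (b * q ^ n) * q ^ n
        ≤ (f b - f 0) * (q * q) ^ n + f 0 * q ^ n := by
      intro n
      have h1 : q ^ n ≤ 1 := pow_le_one₀ hq0.le hq1.le
      have h2 : 0 ≤ q ^ n := pow_nonneg hq0.le n
      have hcv := hconv.2 ⟨hb.le, le_refl b⟩ ⟨le_refl (0:ℝ), hb.le⟩ h2
        (by linarith : (0:ℝ) ≤ 1 - q ^ n) (by ring)
      simp only [smul_eq_mul, mul_zero, add_zero] at hcv
      rw [mul_comm (q ^ n) b] at hcv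
      have := mul_le_mul_of_nonneg_right hcv h2
      have hpow : (q * q) ^ n = q ^ n * q ^ n := mul_pow q q n
      have heq : (f b - f 0) * (q * q) ^ n + f 0 * q ^ n
          = (q ^ n * f b + (1 - q ^ n) * f 0) * q ^ n := by rw [hpow]; ring
      linarith
    have hUsum : Summable (fun n : ℕ => (f b - f 0) * (q * q) ^ n + f 0 * q ^ n) :=
      (hgeo2.mul_left _).add (hgeo.mul_left _)
    have hts : ∑' n : ℕ, ((f b - f 0) * (q * q) ^ n + f 0 * q ^ n)
        = (f b - f 0) * (1 - q * q)⁻¹ + f 0 * (1 - q)⁻¹ := by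
      rw [Summable.tsum_add (hgeo2.mul_left _) (hgeo.mul_left _), tsum_mul_left, tsum_mul_left,
        htg, htg2]
    have key : (1 - q) * ((f b - f 0) * (1 - q * q)⁻¹ + f 0 * (1 - q)⁻¹)
        = (1 / (1 + q)) * (q * f 0 + f b) := by
      have h1 : (1:ℝ) - q ≠ 0 := by linarith
      have h2 : (1:ℝ) - q * q ≠ 0 := by nlinarith
      have h3 : (1:ℝ) + q ≠ 0 := by linarith
      rw [show (1:ℝ) - q * q = (1 - q) * (1 + q) by ring]
      field_simp
      ring
    calc (1 - q) * S ≤ (1 - q) * ∑' n : ℕ, ((f b - f 0) * (q * q) ^ n + f 0 * q ^ n) :=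
          mul_le_mul_of_nonneg_left (Summable.tsum_le_tsum hU hsum hUsum) h1q'.le
      _ = (1 / (1 + q)) * (q * f 0 + f b) := by rw [hts, key]
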